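/- (Quasi-local filtering implies decay of correlation.) Let H be Hermitian with unique ground state |ψ₀⟩ and spectral gap ≥ Δ. Let A, B be Hermitian with ‖A‖, ‖B‖ ≤ 1 and [A,B] = 0. Let f be a filter with f̂(−ν) = 0 for all Bohr frequencies ν ≥ Δ and f̂(−ν) = 1 for all Bohr frequencies ν ≤ 0. If ‖[B, Â_f]‖ ≤ η, then |⟨ψ₀| B A |ψ₀⟩ − ⟨ψ₀|B|ψ₀⟩⟨ψ₀|A|ψ₀⟩| ≤ η. -/

import Mathlib

open Matrix Finset

noncomputable section

/-- The rank-one operator `|ψ i⟩⟨ψ i|`. -/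
def ketbra {n : ℕ} (ψ : Fin n → Fin n → ℂ) (i : Fin n) : Matrix (Fin n) (Fin n) ℂ :=
  Matrix.vecMulVec (ψ i) (star (ψ i))

/-- The set of Bohr frequencies `{E i - E j}` of the Hamiltonian. -/
def bohrSet {n : ℕ} (E : Fin n → ℝ) : Finset ℝ :=
  Finset.image (fun p : Fin n × Fin n => E p.1 - E p.2) Finset.univ

/-- The Bohr-frequency component `A_ν = ∑_{E i - E j = ν} |ψ i⟩⟨ψ i| A |ψ j⟩⟨ψ j|`. -/
def bohrComp {n : ℕ} (ψ : Fin n → Fin n → ℂ) (E : Fin n → ℝ)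
    (A : Matrix (Fin n) (Fin n) ℂ) (ν : ℝ) : Matrix (Fin n) (Fin n) ℂ :=
  ∑ i, ∑ j, if E i - E j = ν then ketbra ψ i * A * ketbra ψ j else 0

/-- The ℓ²→ℓ² operator norm of a matrix. -/
def opNorm {n : ℕ} (M : Matrix (Fin n) (Fin n) ℂ) : ℝ :=
  ‖Matrix.toEuclideanCLM (𝕜 := ℂ) M‖

/-- The filtered operator `Â_f = ∑_ν f̂(−ν) A_ν`, specified via the Fourier transform `f̂`. -/
def sumFiltered {n : ℕ} (ψ : Fin n → Fin n → ℂ) (E : Fin n → ℝ)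
    (A : Matrix (Fin n) (Fin n) ℂ) (fhat : ℝ → ℂ) : Matrix (Fin n) (Fin n) ℂ :=
  ∑ ν ∈ bohrSet E, fhat (-ν) • bohrComp ψ E A ν

lemma ketbra_mulVec {n : ℕ} (ψ : Fin n → Fin n → ℂ) (i : Fin n) (x : Fin n → ℂ) :
    ketbra ψ i *ᵥ x = (star (ψ i) ⬝ᵥ x) • ψ i := by
  ext k
  simp only [ketbra, Matrix.mulVec, dotProduct, Matrix.vecMulVec_apply, Pi.smul_apply,
    smul_eq_mul, Finset.sum_mul]
  exact Finset.sum_congr rfl fun j _ => by ring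

lemma vecMul_ketbra {n : ℕ} (ψ : Fin n → Fin n → ℂ) (i : Fin n) (x : Fin n → ℂ) :
    x ᵥ* ketbra ψ i = (x ⬝ᵥ ψ i) • star (ψ i) := by
  ext k
  simp only [ketbra, Matrix.vecMul, dotProduct, Matrix.vecMulVec_apply, Pi.smul_apply,
    smul_eq_mul, Finset.sum_mul]
  exact Finset.sum_congr rfl fun j _ => by ring

lemma sum_mulVec_aux {n : ℕ} {ι : Type*} (s : Finset ι) (M : ι → Matrix (Fin n) (Fin n) ℂ)
    (v : Fin n → ℂ) : (∑ i ∈ s, M i) *ᵥ v = ∑ i ∈ s, M i *ᵥ v := by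
  ext k
  simp only [Matrix.mulVec, dotProduct, Finset.sum_apply, Matrix.sum_apply, Finset.sum_mul]
  exact Finset.sum_comm

lemma vecMul_sum_aux {n : ℕ} {ι : Type*} (s : Finset ι) (M : ι → Matrix (Fin n) (Fin n) ℂ)
    (v : Fin n → ℂ) : v ᵥ* (∑ i ∈ s, M i) = ∑ i ∈ s, v ᵥ* M i := by
  ext k
  simp only [Matrix.vecMul, dotProduct, Finset.sum_apply, Matrix.sum_apply, Finset.mul_sum]
  exact Finset.sum_comm

lemma vecMul_smulMat {n : ℕ} (c : ℂ) (M : Matrix (Fin n) (Fin n) ℂ) (v : Fin n → ℂ) :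
    v ᵥ* (c • M) = c • (v ᵥ* M) := by
  ext k
  simp only [Matrix.vecMul, dotProduct, Matrix.smul_apply, Pi.smul_apply, smul_eq_mul,
    Finset.mul_sum]
  exact Finset.sum_congr rfl fun j _ => by ring

lemma mem_bohrSet {n : ℕ} (E : Fin n → ℝ) (i j : Fin n) : E i - E j ∈ bohrSet E :=
  Finset.mem_image.2 ⟨(i, j), Finset.mem_univ _, rfl⟩

lemma sumFiltered_eq {n : ℕ} (ψ : Fin n → Fin n → ℂ) (E : Fin n → ℝ)
    (A : Matrix (Fin n) (Fin n) ℂ) (fhat : ℝ → ℂ) :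
    sumFiltered ψ E A fhat
      = ∑ i, ∑ j, fhat (-(E i - E j)) • (ketbra ψ i * A * ketbra ψ j) := by
  unfold sumFiltered bohrComp
  simp only [Finset.smul_sum]
  rw [Finset.sum_comm]
  refine Finset.sum_congr rfl fun i _ => ?_
  rw [Finset.sum_comm]
  refine Finset.sum_congr rfl fun j _ => ?_
  have h : ∀ ν ∈ bohrSet E,
      fhat (-ν) • (if E i - E j = ν then ketbra ψ i * A * ketbra ψ j else 0)
      = if E i - E j = ν then fhat (-ν) • (ketbra ψ i * A * ketbra ψ j) else 0 := by
    intro ν _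
    split <;> simp
  rw [Finset.sum_congr rfl h, Finset.sum_ite_eq (bohrSet E) (E i - E j)
    (fun ν => fhat (-ν) • (ketbra ψ i * A * ketbra ψ j)), if_pos (mem_bohrSet E i j)]

lemma abs_dot_le_opNorm {n : ℕ} (M : Matrix (Fin n) (Fin n) ℂ) (v : Fin n → ℂ)
    (hv : star v ⬝ᵥ v = 1) : ‖star v ⬝ᵥ M *ᵥ v‖ ≤ opNorm M := by
  set v' : EuclideanSpace ℂ (Fin n) := (WithLp.equiv 2 _).symm v with hv'
  have hinner : ∀ w : Fin n → ℂ, inner ℂ v' ((WithLp.equiv 2 (Fin n → ℂ)).symm w) = star v ⬝ᵥ w :=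
    fun w => by rw [hv', WithLp.equiv_symm_apply]; exact (EuclideanSpace.inner_toLp_toLp v w).trans (dotProduct_comm _ _)
  have hnorm : ‖v'‖ = 1 := by
    have h1 : (inner ℂ v' v' : ℂ) = 1 := by rw [hinner v]; exact hv
    have h2 : (inner ℂ v' v' : ℂ) = (‖v'‖ : ℂ) ^ 2 := inner_self_eq_norm_sq_to_K v'
    have h3 : (‖v'‖ : ℂ) ^ 2 = 1 := by rw [← h2, h1]
    have h4 : ‖v'‖ ^ 2 = 1 := by exact_mod_cast h3
    nlinarith [norm_nonneg v']
  have key : star v ⬝ᵥ M *ᵥ v = inner ℂ v' (Matrix.toEuclideanCLM (𝕜 := ℂ) M v') := by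
    rw [hv', WithLp.equiv_symm_apply, Matrix.toEuclideanCLM_toLp]; exact (hinner _).symm
  rw [key]
  calc ‖(inner ℂ v' (Matrix.toEuclideanCLM (𝕜 := ℂ) M v') : ℂ)‖
      ≤ ‖v'‖ * ‖Matrix.toEuclideanCLM (𝕜 := ℂ) M v'‖ := norm_inner_le_norm _ _
    _ ≤ ‖v'‖ * (‖Matrix.toEuclideanCLM (𝕜 := ℂ) M‖ * ‖v'‖) :=
        mul_le_mul_of_nonneg_left
          (ContinuousLinearMap.le_opNorm (Matrix.toEuclideanCLM (𝕜 := ℂ) M) v')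
          (norm_nonneg v')
    _ = opNorm M := by rw [hnorm, one_mul, mul_one, opNorm]

set_option maxHeartbeats 1000000 in
/-- quasi-local filtering implies decay of correlation:
if `‖[B, Â_f]‖ ≤ η` then `|⟨ψ₀|BA|ψ₀⟩ − ⟨ψ₀|B|ψ₀⟩⟨ψ₀|A|ψ₀⟩| ≤ η`. -/
theorem quasilocal_filter_correlation_decay {d : ℕ} (ψ : Fin (d + 1) → Fin (d + 1) → ℂ)
    (E : Fin (d + 1) → ℝ) (H A B : Matrix (Fin (d + 1)) (Fin (d + 1)) ℂ) (Δ η : ℝ)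
    (fhat : ℝ → ℂ)
    (horth : ∀ i j, star (ψ i) ⬝ᵥ ψ j = if i = j then (1 : ℂ) else 0)
    (hcomplete : ∑ i, ketbra ψ i = 1)
    (hH : H = ∑ i, (E i : ℂ) • ketbra ψ i)
    (hgap : ∀ i : Fin (d + 1), i ≠ 0 → E 0 + Δ ≤ E i)
    (hΔ : 0 < Δ)
    (hA : A.IsHermitian) (hB : B.IsHermitian)
    (hAnorm : opNorm A ≤ 1) (hBnorm : opNorm B ≤ 1)
    (hcomm : A * B = B * A)
    (hfhi : ∀ ν ∈ bohrSet E, Δ ≤ ν → fhat (-ν) = 0)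
    (hflo : ∀ ν ∈ bohrSet E, ν ≤ 0 → fhat (-ν) = 1)
    (hη : opNorm (B * sumFiltered ψ E A fhat - sumFiltered ψ E A fhat * B) ≤ η) :
    ‖star (ψ 0) ⬝ᵥ (B * A).mulVec (ψ 0)
        - (star (ψ 0) ⬝ᵥ B.mulVec (ψ 0)) * (star (ψ 0) ⬝ᵥ A.mulVec (ψ 0))‖ ≤ η := by
  set F := sumFiltered ψ E A fhat with hFdef
  have hψ0 : star (ψ 0) ⬝ᵥ ψ 0 = 1 := by rw [horth 0 0]; simp
  -- right action: F *ᵥ ψ 0 = ⟨A⟩ • ψ 0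
  have hright : F *ᵥ ψ 0 = (star (ψ 0) ⬝ᵥ A *ᵥ ψ 0) • ψ 0 := by
    rw [hFdef, sumFiltered_eq, sum_mulVec_aux]
    have step : ∀ i j : Fin (d + 1),
        (fhat (-(E i - E j)) • (ketbra ψ i * A * ketbra ψ j)) *ᵥ ψ 0
          = if j = 0 then fhat (-(E i - E 0)) • ((star (ψ i) ⬝ᵥ A *ᵥ ψ 0) • ψ i) else 0 := by
      intro i j
      rw [Matrix.smul_mulVec, ← Matrix.mulVec_mulVec, ketbra_mulVec ψ j, horth j 0]
      by_cases hj : j = 0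
      · subst hj
        rw [if_pos rfl, if_pos rfl, one_smul, ← Matrix.mulVec_mulVec, ketbra_mulVec ψ i]
      · rw [if_neg hj, if_neg hj, zero_smul, Matrix.mulVec_zero, smul_zero]
    have h1 : ∀ i : Fin (d + 1),
        (∑ j, fhat (-(E i - E j)) • (ketbra ψ i * A * ketbra ψ j)) *ᵥ ψ 0
          = fhat (-(E i - E 0)) • ((star (ψ i) ⬝ᵥ A *ᵥ ψ 0) • ψ i) := by
      intro i
      rw [sum_mulVec_aux, Finset.sum_congr rfl (fun j _ => step i j),
        Finset.sum_ite_eq' Finset.univ (0 : Fin (d + 1)), if_pos (Finset.mem_univ _)]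
    rw [Finset.sum_congr rfl (fun i _ => h1 i)]
    have h2 : ∀ i : Fin (d + 1),
        fhat (-(E i - E 0)) • ((star (ψ i) ⬝ᵥ A *ᵥ ψ 0) • ψ i)
          = if i = 0 then (star (ψ 0) ⬝ᵥ A *ᵥ ψ 0) • ψ 0 else 0 := by
      intro i
      by_cases hi : i = 0
      · subst hi
        rw [if_pos rfl, hflo (E 0 - E 0) (mem_bohrSet E 0 0) (by simp), one_smul]
      · rw [if_neg hi, hfhi (E i - E 0) (mem_bohrSet E i 0)
          (by have := hgap i hi; linarith), zero_smul]
    rw [Finset.sum_congr rfl (fun i _ => h2 i),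
      Finset.sum_ite_eq' Finset.univ (0 : Fin (d + 1)), if_pos (Finset.mem_univ _)]
  -- left action: star (ψ 0) ᵥ* F = star (ψ 0) ᵥ* A
  have hleft : star (ψ 0) ᵥ* F = star (ψ 0) ᵥ* A := by
    rw [hFdef, sumFiltered_eq, vecMul_sum_aux]
    have step : ∀ i j : Fin (d + 1),
        star (ψ 0) ᵥ* (fhat (-(E i - E j)) • (ketbra ψ i * A * ketbra ψ j))
          = if i = 0 then fhat (-(E 0 - E j)) • (star (ψ 0) ᵥ* (A * ketbra ψ j)) else 0 := by
      intro i j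
      rw [vecMul_smulMat, ← Matrix.vecMul_vecMul, ← Matrix.vecMul_vecMul,
        vecMul_ketbra ψ i, horth 0 i]
      by_cases hi : i = 0
      · subst hi
        rw [if_pos rfl, if_pos rfl, one_smul, Matrix.vecMul_vecMul]
      · rw [if_neg (Ne.symm hi), if_neg hi, zero_smul, Matrix.zero_vecMul,
          Matrix.zero_vecMul, smul_zero]
    have h1 : ∀ i : Fin (d + 1),
        star (ψ 0) ᵥ* (∑ j, fhat (-(E i - E j)) • (ketbra ψ i * A * ketbra ψ j))
          = ∑ j, star (ψ 0) ᵥ* (fhat (-(E i - E j)) • (ketbra ψ i * A * ketbra ψ j)) :=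
      fun i => vecMul_sum_aux _ _ _
    rw [Finset.sum_congr rfl (fun i _ => h1 i), Finset.sum_comm]
    have h2 : ∀ j : Fin (d + 1),
        (∑ i, star (ψ 0) ᵥ* (fhat (-(E i - E j)) • (ketbra ψ i * A * ketbra ψ j)))
          = star (ψ 0) ᵥ* (A * ketbra ψ j) := by
      intro j
      rw [Finset.sum_congr rfl (fun i _ => step i j),
        Finset.sum_ite_eq' Finset.univ (0 : Fin (d + 1)), if_pos (Finset.mem_univ _)]
      have hone : fhat (-(E 0 - E j)) = 1 := by
        refine hflo (E 0 - E j) (mem_bohrSet E 0 j) ?_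
        by_cases hj : j = 0
        · subst hj; simp
        · have := hgap j hj; linarith
      rw [hone, one_smul]
    rw [Finset.sum_congr rfl (fun j _ => h2 j), ← vecMul_sum_aux, ← Finset.mul_sum,
      hcomplete, mul_one]
  -- expectation of the commutator
  have hexp : star (ψ 0) ⬝ᵥ (B * F - F * B) *ᵥ ψ 0
      = (star (ψ 0) ⬝ᵥ B.mulVec (ψ 0)) * (star (ψ 0) ⬝ᵥ A.mulVec (ψ 0))
        - star (ψ 0) ⬝ᵥ (B * A).mulVec (ψ 0) := by
    have e1 : star (ψ 0) ⬝ᵥ (B * F) *ᵥ ψ 0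
        = (star (ψ 0) ⬝ᵥ B.mulVec (ψ 0)) * (star (ψ 0) ⬝ᵥ A.mulVec (ψ 0)) := by
      rw [← Matrix.mulVec_mulVec, hright, Matrix.mulVec_smul, dotProduct_smul,
        smul_eq_mul, mul_comm]
    have e2 : star (ψ 0) ⬝ᵥ (F * B) *ᵥ ψ 0 = star (ψ 0) ⬝ᵥ (B * A).mulVec (ψ 0) := by
      rw [Matrix.dotProduct_mulVec, ← Matrix.vecMul_vecMul, hleft, Matrix.vecMul_vecMul,
        ← hcomm, ← Matrix.dotProduct_mulVec]
    rw [Matrix.sub_mulVec, dotProduct_sub, e1, e2]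
  have habs : star (ψ 0) ⬝ᵥ (B * A).mulVec (ψ 0)
        - (star (ψ 0) ⬝ᵥ B.mulVec (ψ 0)) * (star (ψ 0) ⬝ᵥ A.mulVec (ψ 0))
      = -(star (ψ 0) ⬝ᵥ (B * F - F * B) *ᵥ ψ 0) := by
    rw [hexp]; ring
  rw [habs, norm_neg]
  have hb := abs_dot_le_opNorm (B * F - F * B) (ψ 0) hψ0
  exact le_trans hb hη

end
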